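/- Assume T = Σ_j p_j is a power of 2. Fix an interval I = [s,t] with 0 ≤ s ≤ t < T, let j_1, …, j_k be the jobs of J(I) listed in non-decreasing order of release date, and for each i let S_i be the unique segment of Seg(j_i) containing slot t. Then S_k ⊆ S_{k−1} ⊆ … ⊆ S_1; moreover, for every 1 < i ≤ k, S_{i−1} is the unique segment of Seg(j_{i−1}) that contains S_i (so these job segments form an ancestor-to-descendant path in the tree whose parent relation maps (j_i, S_i) to the segment of the preceding job containing S_i). -/

import Mathlib

/-- The procedure `FormSegments`, starting at stage `s` with current time `t`, stopping
once `t ≥ T`.  Each produced entry `(s, a, b)` records the stage `s` at which the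
interval `[a, b]` was appended. -/
def segAux (T : ℕ) (s t : ℕ) : List (ℕ × ℕ × ℕ) :=
  if h : t < T then
    if 2 ^ (s + 1) ∣ t then
      (s, t, t + 2 ^ s) :: (s, t + 2 ^ s, t + 2 ^ (s + 1)) ::
        segAux T (s + 1) (t + 2 ^ (s + 1))
    else
      (s, t, t + 2 ^ s) :: segAux T (s + 1) (t + 2 ^ s)
  else []
termination_by T - t
decreasing_by
  · have h1 : 0 < 2 ^ (s + 1) := Nat.pow_pos (by norm_num)
    omega
  · have h1 : 0 < 2 ^ s := Nat.pow_pos (by norm_num)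
    omega

/-- `Seg T r` : the sequence of intervals of `Seg(r)` (forgetting the stages). -/
def Seg (T rj : ℕ) : List (ℕ × ℕ) := (segAux T 0 rj).map fun x => (x.2.1, x.2.2)

def nxt (s u : ℕ) : ℕ := if 2 ^ (s + 1) ∣ u then u + 2 ^ (s + 1) else u + 2 ^ s

lemma nxt_gt (s u : ℕ) : u < nxt s u := by
  unfold nxt
  have h1 : 0 < 2 ^ (s + 1) := Nat.pow_pos (by norm_num)
  have h2 : 0 < 2 ^ s := Nat.pow_pos (by norm_num)
  split <;> omega

lemma nxt_le (s u : ℕ) : nxt s u ≤ u + 2 ^ (s + 1) := by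
  unfold nxt
  have h2 : 2 ^ (s + 1) = 2 ^ s * 2 := pow_succ 2 s
  split <;> omega

lemma nxt_ge (s u : ℕ) : u + 2 ^ s ≤ nxt s u := by
  unfold nxt
  have h2 : 2 ^ (s + 1) = 2 ^ s * 2 := pow_succ 2 s
  split <;> omega

lemma nxt_dvd (s u : ℕ) (h : 2 ^ s ∣ u) : 2 ^ (s + 1) ∣ nxt s u := by
  unfold nxt
  split_ifs with h1
  · exact Dvd.dvd.add h1 dvd_rfl
  · obtain ⟨m, rfl⟩ := h
    rcases Nat.even_or_odd m with he | ho
    · exfalso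
      obtain ⟨k, rfl⟩ := he
      exact h1 ⟨k, by ring⟩
    · obtain ⟨k, rfl⟩ := ho
      exact ⟨k + 1, by ring⟩

lemma add_dvd_le {d x y : ℕ} (hd : 0 < d) (hx : d ∣ x) (hy : d ∣ y) (h : x < y) :
    x + d ≤ y := by
  obtain ⟨a, rfl⟩ := hx
  obtain ⟨b, rfl⟩ := hy
  have : a < b := by
    by_contra hc
    exact absurd (Nat.mul_le_mul_left d (by omega : b ≤ a)) (by omega)
  calc d * a + d = d * (a + 1) := by ring
    _ ≤ d * b := Nat.mul_le_mul_left d (by omega)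

lemma nxt_mono (s u u' : ℕ) (hu : 2 ^ s ∣ u) (hu' : 2 ^ s ∣ u') (h : u ≤ u') :
    nxt s u ≤ nxt s u' := by
  rcases eq_or_lt_of_le h with rfl | hlt
  · exact le_refl _
  · have h1 : 0 < 2 ^ s := Nat.pow_pos (by norm_num)
    have h2 := add_dvd_le h1 hu hu' hlt
    have h3 := nxt_le s u
    have h4 := nxt_ge s u'
    have h5 : 2 ^ (s + 1) = 2 ^ s * 2 := pow_succ 2 s
    omega

/-- Structure of elements of `segAux`. -/
lemma segD (T s u : ℕ) (hd : 2 ^ s ∣ u) :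
    ∀ x ∈ segAux T s u, s ≤ x.1 ∧ u ≤ x.2.1 ∧ x.2.2 = x.2.1 + 2 ^ x.1 ∧ 2 ^ x.1 ∣ x.2.1 := by
  intro x hx
  rw [segAux] at hx
  have h2 : 0 < 2 ^ s := Nat.pow_pos (by norm_num)
  have h1 : 2 ^ (s + 1) = 2 ^ s * 2 := pow_succ 2 s
  by_cases hT : u < T
  · rw [dif_pos hT] at hx
    by_cases hdd : 2 ^ (s + 1) ∣ u
    · rw [if_pos hdd] at hx
      simp only [List.mem_cons] at hx
      rcases hx with rfl | rfl | hx
      · exact ⟨le_refl s, le_refl u, rfl, hd⟩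
      · refine ⟨le_refl s, ?_, ?_, ?_⟩
        · show u ≤ u + 2 ^ s
          omega
        · show u + 2 ^ (s + 1) = u + 2 ^ s + 2 ^ s
          omega
        · show 2 ^ s ∣ u + 2 ^ s
          exact Dvd.dvd.add hd dvd_rfl
      · have hrec := segD T (s + 1) (u + 2 ^ (s + 1)) (Dvd.dvd.add hdd dvd_rfl) x hx
        exact ⟨by omega, by omega, hrec.2.2.1, hrec.2.2.2⟩
    · rw [if_neg hdd] at hx
      simp only [List.mem_cons] at hx
      rcases hx with rfl | hx
      · exact ⟨le_refl s, le_refl u, rfl, hd⟩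
      · have hnd : 2 ^ (s + 1) ∣ u + 2 ^ s := by
          have := nxt_dvd s u hd
          unfold nxt at this
          rwa [if_neg hdd] at this
        have hrec := segD T (s + 1) (u + 2 ^ s) hnd x hx
        exact ⟨by omega, by omega, hrec.2.2.1, hrec.2.2.2⟩
  · rw [dif_neg hT] at hx
    exact absurd hx List.not_mem_nil
termination_by T - u
decreasing_by
  · omega
  · omega

/-- Dyadic nesting. -/
lemma dyadic {g g' a a' t : ℕ} (hgs : g' ≤ g) (ha : 2 ^ g ∣ a) (ha' : 2 ^ g' ∣ a')
    (h1 : a ≤ t) (h2 : t < a + 2 ^ g) (h3 : a' ≤ t) (h4 : t < a' + 2 ^ g') :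
    a ≤ a' ∧ a' + 2 ^ g' ≤ a + 2 ^ g := by
  have hpos : 0 < 2 ^ g' := Nat.pow_pos (by norm_num)
  have hda : 2 ^ g' ∣ a := dvd_trans (pow_dvd_pow 2 hgs) ha
  have hend : 2 ^ g' ∣ a + 2 ^ g := Dvd.dvd.add hda (pow_dvd_pow 2 hgs)
  constructor
  · by_contra hc
    have := add_dvd_le hpos ha' hda (by omega)
    omega
  · exact add_dvd_le hpos ha' hend (by omega)

/-- Main nesting lemma. -/
lemma segN (T s u u' t : ℕ) (hd : 2 ^ s ∣ u) (hd' : 2 ^ s ∣ u') (huu : u ≤ u')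
    (hut : u' ≤ t) (htT : t < T) :
    ∀ x ∈ segAux T s u, ∀ x' ∈ segAux T s u',
      x.2.1 ≤ t → t < x.2.2 → x'.2.1 ≤ t → t < x'.2.2 →
      x.2.1 ≤ x'.2.1 ∧ x'.2.2 ≤ x.2.2 := by
  intro x hx x' hx' h1 h2 h3 h4
  have hpos : 0 < 2 ^ s := Nat.pow_pos (by norm_num)
  have hps : 2 ^ (s + 1) = 2 ^ s * 2 := pow_succ 2 s
  have huT : u < T := by omega
  have hu'T : u' < T := by omega
  by_cases hrec : nxt s u' ≤ t
  · -- both segments lie in the recursive tails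
    have hnm := nxt_mono s u u' hd hd' huu
    have hge := nxt_ge s u
    have hge' := nxt_ge s u'
    have hxtail : x ∈ segAux T (s + 1) (nxt s u) := by
      rw [segAux, dif_pos huT] at hx
      by_cases hdd : 2 ^ (s + 1) ∣ u
      · rw [if_pos hdd] at hx
        have hn : nxt s u = u + 2 ^ (s + 1) := if_pos hdd
        simp only [List.mem_cons] at hx
        rcases hx with rfl | rfl | hx
        · exfalso
          have h2' : t < u + 2 ^ s := h2
          omega
        · exfalso
          have h2' : t < u + 2 ^ (s + 1) := h2
          omega
        · rwa [hn]
      · rw [if_neg hdd] at hx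
        have hn : nxt s u = u + 2 ^ s := if_neg hdd
        simp only [List.mem_cons] at hx
        rcases hx with rfl | hx
        · exfalso
          have h2' : t < u + 2 ^ s := h2
          omega
        · rwa [hn]
    have hx'tail : x' ∈ segAux T (s + 1) (nxt s u') := by
      rw [segAux, dif_pos hu'T] at hx'
      by_cases hdd : 2 ^ (s + 1) ∣ u'
      · rw [if_pos hdd] at hx'
        have hn : nxt s u' = u' + 2 ^ (s + 1) := if_pos hdd
        simp only [List.mem_cons] at hx'
        rcases hx' with rfl | rfl | hx'
        · exfalso
          have h4' : t < u' + 2 ^ s := h4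
          omega
        · exfalso
          have h4' : t < u' + 2 ^ (s + 1) := h4
          omega
        · rwa [hn]
      · rw [if_neg hdd] at hx'
        have hn : nxt s u' = u' + 2 ^ s := if_neg hdd
        simp only [List.mem_cons] at hx'
        rcases hx' with rfl | hx'
        · exfalso
          have h4' : t < u' + 2 ^ s := h4
          omega
        · rwa [hn]
    exact segN T (s + 1) (nxt s u) (nxt s u') t (nxt_dvd s u hd) (nxt_dvd s u' hd')
      hnm hrec htT x hxtail x' hx'tail h1 h2 h3 h4
  · -- x' is a head segment of the u'-run: dyadic of length 2^s
    have hx'head : x'.2.2 = x'.2.1 + 2 ^ s ∧ 2 ^ s ∣ x'.2.1 := by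
      rw [segAux, dif_pos hu'T] at hx'
      by_cases hdd : 2 ^ (s + 1) ∣ u'
      · rw [if_pos hdd] at hx'
        have hn : nxt s u' = u' + 2 ^ (s + 1) := if_pos hdd
        simp only [List.mem_cons] at hx'
        rcases hx' with rfl | rfl | hx'
        · exact ⟨rfl, hd'⟩
        · refine ⟨?_, Dvd.dvd.add hd' dvd_rfl⟩
          show u' + 2 ^ (s + 1) = u' + 2 ^ s + 2 ^ s
          omega
        · exfalso
          have := segD T (s + 1) (u' + 2 ^ (s + 1)) (Dvd.dvd.add hdd dvd_rfl) x' hx'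
          omega
      · rw [if_neg hdd] at hx'
        have hn : nxt s u' = u' + 2 ^ s := if_neg hdd
        simp only [List.mem_cons] at hx'
        rcases hx' with rfl | hx'
        · exact ⟨rfl, hd'⟩
        · exfalso
          have hnd : 2 ^ (s + 1) ∣ u' + 2 ^ s := by
            have := nxt_dvd s u' hd'
            rwa [hn] at this
          have := segD T (s + 1) (u' + 2 ^ s) hnd x' hx'
          omega
    obtain ⟨hg, hxu, hxe, hxd⟩ := segD T s u hd x hx
    have := dyadic (g := x.1) (g' := s) hg hxd hx'head.2 h1 (by omega) h3 (by omega)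
    omega
termination_by t - u'
decreasing_by
  · have := nxt_gt s u'
    omega

/-- suppose `T = ∑_j p_j = 2^ℓ`.  Fix an interval `I = [s,t]` with
`0 ≤ s ≤ t < T`, let `j_1, …, j_k` be the jobs of `J(I)` listed in non-decreasing
order of release date (`js` enumerates `J(I)` without repetition, sorted by release
date), and let `S i` be the segment of `Seg(r (js_i))` containing slot `t`.  Then
`S_k ⊆ S_{k-1} ⊆ ⋯ ⊆ S_1`, and for each `i`, `S_i` is the unique segment of
`Seg(r (js_i))` containing `S_{i+1}`. -/
theorem stmt9 {J : Type} [Fintype J] [DecidableEq J] (p r : J → ℕ) (w : J → ℚ)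
    (hp : ∀ j, 1 ≤ p j) (hw : ∀ j, 0 ≤ w j)
    (ℓ : ℕ) (hT : ∑ j, p j = 2 ^ ℓ) (hrT : ∀ j, r j < 2 ^ ℓ)
    (hbusy : ∀ t : ℕ, 1 ≤ t → t ≤ 2 ^ ℓ →
      t ≤ ∑ j ∈ Finset.univ.filter fun j => r j < t, p j)
    (s t : ℕ) (hst : s ≤ t) (ht : t < 2 ^ ℓ)
    (js : List J) (hnd : js.Nodup)
    (hmem : ∀ j, j ∈ js ↔ (s ≤ r j ∧ r j ≤ t))
    (hsort : js.Pairwise fun j j' => r j ≤ r j')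
    (S : ℕ → ℕ × ℕ)
    (hS : ∀ i (hi : i < js.length),
      S i ∈ Seg (2 ^ ℓ) (r (js.get ⟨i, hi⟩)) ∧ (S i).1 ≤ t ∧ t + 1 ≤ (S i).2) :
    (∀ i i', i ≤ i' → i' < js.length → (S i).1 ≤ (S i').1 ∧ (S i').2 ≤ (S i).2) ∧
    (∀ i (hi : i + 1 < js.length),
      ∀ S' ∈ Seg (2 ^ ℓ) (r (js.get ⟨i, Nat.lt_of_succ_lt hi⟩)),
        S'.1 ≤ (S (i + 1)).1 → (S (i + 1)).2 ≤ S'.2 → S' = S i) := by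
  constructor
  · intro i i' hii hi'
    have hi : i < js.length := lt_of_le_of_lt hii hi'
    obtain ⟨hm1, hm2, hm3⟩ := hS i hi
    obtain ⟨hm1', hm2', hm3'⟩ := hS i' hi'
    have hr12 : r (js.get ⟨i, hi⟩) ≤ r (js.get ⟨i', hi'⟩) := by
      rcases eq_or_lt_of_le hii with rfl | h
      · exact le_refl _
      · exact List.Pairwise.rel_get_of_lt hsort
          (show (⟨i, hi⟩ : Fin js.length) < ⟨i', hi'⟩ from h)
    have hrt : r (js.get ⟨i', hi'⟩) ≤ t :=
      ((hmem _).mp (js.get_mem _)).2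
    obtain ⟨x, hxmem, hxeq⟩ := List.mem_map.mp hm1
    obtain ⟨x', hx'mem, hx'eq⟩ := List.mem_map.mp hm1'
    have e1 : x.2.1 = (S i).1 := by rw [← hxeq]
    have e2 : x.2.2 = (S i).2 := by rw [← hxeq]
    have e3 : x'.2.1 = (S i').1 := by rw [← hx'eq]
    have e4 : x'.2.2 = (S i').2 := by rw [← hx'eq]
    have := segN (2 ^ ℓ) 0 (r (js.get ⟨i, hi⟩)) (r (js.get ⟨i', hi'⟩)) t
      (by norm_num) (by norm_num) hr12 hrt ht x hxmem x' hx'mem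
      (by omega) (by omega) (by omega) (by omega)
    omega
  · intro i hi S' hS'mem hle1 hle2
    have hi0 : i < js.length := Nat.lt_of_succ_lt hi
    obtain ⟨hm1, hm2, hm3⟩ := hS i hi0
    obtain ⟨hn1, hn2, hn3⟩ := hS (i + 1) hi
    have hrt : r (js.get ⟨i, hi0⟩) ≤ t :=
      ((hmem _).mp (js.get_mem _)).2
    obtain ⟨x, hxmem, hxeq⟩ := List.mem_map.mp hS'mem
    obtain ⟨y, hymem, hyeq⟩ := List.mem_map.mp hm1
    have e1 : x.2.1 = S'.1 := by rw [← hxeq]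
    have e2 : x.2.2 = S'.2 := by rw [← hxeq]
    have e3 : y.2.1 = (S i).1 := by rw [← hyeq]
    have e4 : y.2.2 = (S i).2 := by rw [← hyeq]
    have A := segN (2 ^ ℓ) 0 (r (js.get ⟨i, hi0⟩)) (r (js.get ⟨i, hi0⟩)) t
      (by norm_num) (by norm_num) le_rfl hrt ht x hxmem y hymem
      (by omega) (by omega) (by omega) (by omega)
    have B := segN (2 ^ ℓ) 0 (r (js.get ⟨i, hi0⟩)) (r (js.get ⟨i, hi0⟩)) t
      (by norm_num) (by norm_num) le_rfl hrt ht y hymem x hxmem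
      (by omega) (by omega) (by omega) (by omega)
    rw [← hxeq, ← hyeq]
    simp only [Prod.mk.injEq]
    omega
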